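/- Every coefficient of the Alexander polynomial Δ lies in {−1, 0, 1}; that is, all nonzero coefficients of Δ are equal to ±1. -/

import Mathlib

open Finset

lemma sum_boole_unique {ι : Type*} (s : Finset ι) (f : ι → ℤ)
    (h0 : ∀ x ∈ s, f x = 0 ∨ f x = 1)
    (hu : ∀ x ∈ s, ∀ y ∈ s, f x ≠ 0 → f y ≠ 0 → x = y) :
    ∑ x ∈ s, f x ∈ ({0, 1} : Set ℤ) := by
  by_cases h : ∃ x ∈ s, f x ≠ 0
  · obtain ⟨x, hx, hfx⟩ := h
    have : ∑ y ∈ s, f y = f x := by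
      refine Finset.sum_eq_single_of_mem x hx fun y hy hyx => ?_
      by_contra hfy
      exact hyx (hu y hy x hx hfy hfx)
    rw [this]
    rcases h0 x hx with h | h
    · exact absurd h hfx
    · simp [h]
  · push_neg at h
    simp [Finset.sum_eq_zero h]

lemma ite_one_zero_mul (P Q : Prop) [Decidable P] [Decidable Q] :
    (if P then (1:ℤ) else 0) * (if Q then (1:ℤ) else 0) = if P ∧ Q then 1 else 0 := by
  split_ifs <;> simp_all

theorem alexander_poly_coeffs_pm_one
    (n : ℕ) (hn : 3 ≤ n) (a : Fin (n - 1) → ℕ)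
    (ha : ∀ j, 2 ≤ a j)
    (hcop : ∀ i j, i ≠ j → Nat.Coprime (a i) (a j))
    (α : ℕ) (hα : α = ∏ j, a j)
    (c : Fin (n - 1) → ℕ) (hc : ∀ j, a j * c j = α)
    (Δ : Polynomial ℤ)
    (hΔ : Δ * ∏ j, (1 - (Polynomial.X : Polynomial ℤ) ^ (c j))
        = (1 - (Polynomial.X : Polynomial ℤ) ^ α) ^ (n - 2) *
            (1 - (Polynomial.X : Polynomial ℤ))) :
    ∀ k : ℕ, Δ.coeff k ∈ ({-1, 0, 1} : Set ℤ) := by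
  have hαpos : 0 < α := by
    rw [hα]; exact Finset.prod_pos fun j _ => lt_of_lt_of_le two_pos (ha j)
  have hapos : ∀ j, 0 < a j := fun j => lt_of_lt_of_le two_pos (ha j)
  have hcpos : ∀ j, 0 < c j := by
    intro j
    rcases Nat.eq_zero_or_pos (c j) with h | h
    · have := hc j; rw [h, mul_zero] at this; omega
    · exact h
  have hcval : ∀ j, c j = ∏ m ∈ Finset.univ.erase j, a m := by
    intro j
    have h1 : a j * c j = a j * ∏ m ∈ Finset.univ.erase j, a m := by
      rw [hc j, hα, Finset.mul_prod_erase Finset.univ a (Finset.mem_univ j)]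
    exact Nat.eq_of_mul_eq_mul_left (hapos j) h1
  have hdvd : ∀ i j, i ≠ j → a i ∣ c j := by
    intro i j hij
    rw [hcval j]
    exact Finset.dvd_prod_of_mem a (Finset.mem_erase.2 ⟨hij, Finset.mem_univ i⟩)
  have hcopc : ∀ i, Nat.Coprime (a i) (c i) := by
    intro i
    rw [hcval i]
    exact Nat.Coprime.prod_right fun m hm =>
      hcop i m fun h => (Finset.mem_erase.1 hm).1 h.symm
  -- power series setup
  set G : Fin (n - 1) → PowerSeries ℤ :=
    fun j => ∑ k ∈ Finset.range (a j), (PowerSeries.X : PowerSeries ℤ) ^ (k * c j) with hG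
  set Geo : PowerSeries ℤ := PowerSeries.mk fun s => if α ∣ s then (1 : ℤ) else 0 with hGeo
  set Q : PowerSeries ℤ := (∏ j, G j) * Geo with hQdef
  have coeff_Geo : ∀ s, PowerSeries.coeff (R := ℤ) s Geo = if α ∣ s then 1 else 0 := by
    intro s; rw [hGeo, PowerSeries.coeff_mk]
  have coeff_G : ∀ j m, PowerSeries.coeff (R := ℤ) m (G j)
      = if c j ∣ m ∧ m < α then 1 else 0 := by
    intro j m
    rw [hG]
    simp only [map_sum, PowerSeries.coeff_X_pow]
    by_cases hd : c j ∣ m ∧ m < α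
    · obtain ⟨⟨k, hk⟩, hm⟩ := hd
      have hklt : k < a j := by
        have h2 : c j * k < a j * c j := by rw [← hk, hc j]; exact hm
        rw [mul_comm (a j) (c j)] at h2
        exact lt_of_mul_lt_mul_left h2 (Nat.zero_le _)
      rw [Finset.sum_eq_single_of_mem k (Finset.mem_range.2 hklt)]
      · rw [if_pos (by rw [hk, mul_comm]), if_pos ⟨⟨k, hk⟩, hm⟩]
      · intro b _ hbk
        rw [if_neg]
        intro hb
        exact hbk (Nat.eq_of_mul_eq_mul_right (hcpos j) (by rw [← hb, hk, mul_comm]))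
    · rw [if_neg hd]
      refine Finset.sum_eq_zero fun b hb => ?_
      rw [if_neg]
      intro hmb
      refine hd ⟨⟨b, by rw [hmb, mul_comm]⟩, ?_⟩
      rw [hmb, ← hc j]
      exact (Nat.mul_lt_mul_right (hcpos j)).mpr (Finset.mem_range.1 hb)
  -- (1 - X^α) * Geo = 1
  have hGeoInv : (1 - (PowerSeries.X : PowerSeries ℤ) ^ α) * Geo = 1 := by
    ext N
    rw [sub_mul, one_mul, map_sub, PowerSeries.coeff_X_pow_mul']
    rw [coeff_Geo, coeff_Geo, PowerSeries.coeff_one]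
    by_cases h0 : N = 0
    · subst h0
      rw [if_pos (dvd_zero α), if_neg (by omega), if_pos rfl]
      ring
    · by_cases h1 : α ∣ N
      · have hle : α ≤ N := Nat.le_of_dvd (Nat.pos_of_ne_zero h0) h1
        rw [if_pos h1, if_pos hle, if_pos (Nat.dvd_sub h1 dvd_rfl), if_neg h0]
        ring
      · rw [if_neg h1, if_neg h0]
        by_cases h2 : α ≤ N
        · rw [if_pos h2, if_neg (fun h3 => h1 (by
            have h4 := Nat.dvd_add h3 (dvd_refl α)
            rwa [Nat.sub_add_cancel h2] at h4))]
          ring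
        · rw [if_neg h2]
          ring
  -- (1 - X^{c j}) * G j = 1 - X^α
  have hGinv : ∀ j, (1 - (PowerSeries.X : PowerSeries ℤ) ^ (c j)) * G j
      = 1 - (PowerSeries.X : PowerSeries ℤ) ^ α := by
    intro j
    have h0 : G j = ∑ k ∈ Finset.range (a j),
        ((PowerSeries.X : PowerSeries ℤ) ^ (c j)) ^ k := by
      rw [hG]
      exact Finset.sum_congr rfl fun k _ => by rw [← pow_mul, mul_comm]
    rw [h0, mul_neg_geom_sum, ← pow_mul, mul_comm (c j) (a j), hc j]
  -- cast hΔ to power series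
  have hΔps : (↑Δ : PowerSeries ℤ) * ∏ j, (1 - (PowerSeries.X : PowerSeries ℤ) ^ (c j))
      = (1 - (PowerSeries.X : PowerSeries ℤ) ^ α) ^ (n - 2)
        * (1 - (PowerSeries.X : PowerSeries ℤ)) := by
    have h1 := congrArg (Polynomial.coeToPowerSeries.ringHom (R := ℤ)) hΔ
    simpa only [map_mul, map_prod, map_pow, map_sub, map_one,
      Polynomial.coeToPowerSeries.ringHom_apply, Polynomial.coe_X] using h1
  -- cancellation
  have hnn : n - 1 = (n - 2) + 1 := by omega
  have hne : (∏ j, (1 - (PowerSeries.X : PowerSeries ℤ) ^ (c j))) ≠ 0 := by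
    intro h
    have h1 := congrArg (PowerSeries.constantCoeff (R := ℤ)) h
    rw [map_prod] at h1
    have h2 : ∀ j ∈ Finset.univ, PowerSeries.constantCoeff (R := ℤ)
        (1 - (PowerSeries.X : PowerSeries ℤ) ^ (c j)) = 1 := by
      intro j _
      rw [map_sub, map_one, map_pow, PowerSeries.constantCoeff_X,
        zero_pow (Nat.pos_iff_ne_zero.1 (hcpos j)), sub_zero]
    rw [Finset.prod_congr rfl h2, Finset.prod_const_one, map_zero] at h1
    exact one_ne_zero h1
  have hprod : Q * ∏ j, (1 - (PowerSeries.X : PowerSeries ℤ) ^ (c j))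
      = (1 - (PowerSeries.X : PowerSeries ℤ) ^ α) ^ (n - 2) := by
    rw [hQdef, mul_comm (∏ j, G j) Geo, mul_assoc, ← Finset.prod_mul_distrib]
    rw [Finset.prod_congr rfl fun j _ => by rw [mul_comm, hGinv j]]
    rw [Finset.prod_const, Finset.card_univ, Fintype.card_fin, hnn, pow_succ]
    rw [show Geo * ((1 - (PowerSeries.X : PowerSeries ℤ) ^ α) ^ (n - 2)
        * (1 - (PowerSeries.X : PowerSeries ℤ) ^ α))
      = (1 - (PowerSeries.X : PowerSeries ℤ) ^ α) ^ (n - 2)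
        * ((1 - (PowerSeries.X : PowerSeries ℤ) ^ α) * Geo) from by ring]
    rw [hGeoInv, mul_one]
  have key : (↑Δ : PowerSeries ℤ) = (1 - (PowerSeries.X : PowerSeries ℤ)) * Q := by
    apply mul_right_cancel₀ hne
    rw [hΔps, mul_assoc, hprod]
    ring
  -- coefficients of Q are 0 or 1
  have hQmem : ∀ N, PowerSeries.coeff (R := ℤ) N Q ∈ ({0, 1} : Set ℤ) := by
    intro N
    rw [hQdef, PowerSeries.coeff_mul]
    have step : ∀ p ∈ Finset.HasAntidiagonal.antidiagonal N,
        PowerSeries.coeff (R := ℤ) p.1 (∏ j, G j) * PowerSeries.coeff (R := ℤ) p.2 Geo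
        = ∑ l ∈ Finset.finsuppAntidiag Finset.univ p.1,
            (if (∀ j, c j ∣ l j ∧ l j < α) ∧ α ∣ p.2 then (1:ℤ) else 0) := by
      intro p _
      rw [PowerSeries.coeff_prod, coeff_Geo, Finset.sum_mul]
      refine Finset.sum_congr rfl fun l _ => ?_
      rw [Finset.prod_congr rfl fun j _ => coeff_G j (l j), Finset.prod_boole,
        ite_one_zero_mul]
      simp
    rw [Finset.sum_congr rfl step, Finset.sum_sigma']
    refine sum_boole_unique _ _ (fun x _ => ?_) ?_
    · split_ifs <;> simp
    · rintro ⟨p, l⟩ hx ⟨p', l'⟩ hy hfx hfy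
      dsimp only at hx hy hfx hfy
      rw [Finset.mem_sigma] at hx hy
      obtain ⟨hp, hl⟩ := hx
      obtain ⟨hp', hl'⟩ := hy
      rw [Finset.HasAntidiagonal.mem_antidiagonal] at hp hp'
      rw [Finset.mem_finsuppAntidiag] at hl hl'
      simp only [Sigma.fst, Sigma.snd] at hp hp' hl hl'
      have hfx' : (∀ j, c j ∣ l j ∧ l j < α) ∧ α ∣ p.2 := by
        by_contra h; rw [if_neg h] at hfx; exact hfx rfl
      have hfy' : (∀ j, c j ∣ l' j ∧ l' j < α) ∧ α ∣ p'.2 := by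
        by_contra h; rw [if_neg h] at hfy; exact hfy rfl
      obtain ⟨hcond, hs⟩ := hfx'
      obtain ⟨hcond', hs'⟩ := hfy'
      -- key modular fact
      have hmodeq : ∀ (l : Fin (n - 1) →₀ ℕ) (p : ℕ × ℕ),
          p.1 + p.2 = N → (∑ j ∈ Finset.univ, l j) = p.1 →
          (∀ j, c j ∣ l j ∧ l j < α) → α ∣ p.2 →
          ∀ i, N ≡ l i [MOD a i] := by
        intro l p hpN hlsum hcond hs i
        have hsplit : (∑ j ∈ Finset.univ, l j)
            = l i + ∑ j ∈ Finset.univ.erase i, l j :=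
          (Finset.add_sum_erase Finset.univ l (Finset.mem_univ i)).symm
        have hDdvd : a i ∣ (∑ j ∈ Finset.univ.erase i, l j) + p.2 := by
          refine Nat.dvd_add (Finset.dvd_sum fun j hj => ?_) ?_
          · exact dvd_trans (hdvd i j fun h => (Finset.mem_erase.1 hj).1 h.symm)
              (hcond j).1
          · exact dvd_trans (⟨c i, (hc i).symm⟩ : a i ∣ α) hs
        have hN : N = l i + ((∑ j ∈ Finset.univ.erase i, l j) + p.2) := by
          rw [← hpN, ← hlsum, hsplit]; omega
        have hle : l i ≤ N := by omega
        refine ((Nat.modEq_iff_dvd' hle).2 ?_).symm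
        rw [show N - l i = (∑ j ∈ Finset.univ.erase i, l j) + p.2 from by omega]
        exact hDdvd
      have hleq : l = l' := by
        ext i
        have h1 := hmodeq l p hp hl.1 hcond hs i
        have h2 := hmodeq l' p' hp' hl'.1 hcond' hs' i
        have h3 : l i ≡ l' i [MOD a i] := h1.symm.trans h2
        obtain ⟨k, hk⟩ := (hcond i).1
        obtain ⟨k', hk'⟩ := (hcond' i).1
        have hklt : k < a i := by
          have := (hcond i).2
          rw [hk, ← hc i, mul_comm (a i) (c i)] at this
          exact lt_of_mul_lt_mul_left this (Nat.zero_le _)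
        have hklt' : k' < a i := by
          have := (hcond' i).2
          rw [hk', ← hc i, mul_comm (a i) (c i)] at this
          exact lt_of_mul_lt_mul_left this (Nat.zero_le _)
        have h4 : k ≡ k' [MOD a i] := by
          refine Nat.ModEq.cancel_left_of_coprime (hcopc i) ?_
          rw [← hk, ← hk']
          exact h3
        have h5 : k = k' := by
          have := h4
          unfold Nat.ModEq at this
          rwa [Nat.mod_eq_of_lt hklt, Nat.mod_eq_of_lt hklt'] at this
        rw [hk, hk', h5]
      have hpeq : p = p' := by
        have h1 : p.1 = p'.1 := by rw [← hl.1, ← hl'.1, hleq]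
        have h2 : p.2 = p'.2 := by omega
        exact Prod.ext h1 h2
      subst hpeq
      rw [hleq]
  -- conclude
  intro k
  have hco : ∀ m, Δ.coeff m = PowerSeries.coeff (R := ℤ) m Q
      - if 1 ≤ m then PowerSeries.coeff (R := ℤ) (m - 1) Q else 0 := by
    intro m
    rw [← Polynomial.coeff_coe, key, sub_mul, one_mul, map_sub]
    congr 1
    rw [show (PowerSeries.X : PowerSeries ℤ) = PowerSeries.X ^ 1 from (pow_one _).symm,
      PowerSeries.coeff_X_pow_mul']
  have h1 : PowerSeries.coeff (R := ℤ) k Q = 0 ∨ PowerSeries.coeff (R := ℤ) k Q = 1 := by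
    have := hQmem k
    simpa [Set.mem_insert_iff, Set.mem_singleton_iff] using this
  have h2 : PowerSeries.coeff (R := ℤ) (k - 1) Q = 0 ∨ PowerSeries.coeff (R := ℤ) (k - 1) Q = 1 := by
    have := hQmem (k - 1)
    simpa [Set.mem_insert_iff, Set.mem_singleton_iff] using this
  rw [hco k]
  simp only [Set.mem_insert_iff, Set.mem_singleton_iff]
  rcases h1 with h1 | h1 <;> rcases h2 with h2 | h2 <;> rw [h1] <;>
    split_ifs <;> norm_num [h2]
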